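/- Let B be a closed densely defined operator between Hilbert spaces with reduced minimum modulus γ(B), and Q bounded self-adjoint with 0 ≤ Q ≤ q·I. Suppose ω ∈ ℂ with Re ω ≠ 0 and there exist unit-norm-bounded sequences f_n ≠ 0, g_n with Bg_n − (−iQ − ω)f_n → 0, ‖f_n‖ ≥ c > 0, g_n = g_n¹ + g_n² with g_n² ∈ ker B, ‖g_n¹‖² − ‖f_n‖² → 0, and 2 Im ω ‖f_n‖² + ⟨Qf_n, f_n⟩ → 0 with Im ω ≤ 0. Then γ(B)² ≤ 2q|Im ω| − 3(Im ω)² + (Re ω)². -/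

import Mathlib

open Filter
open scoped InnerProductSpace

noncomputable section

/-- The kernel of a partially defined operator `B`, as a subset of the ambient space. -/
def pKer {G H : Type*} [NormedAddCommGroup G] [InnerProductSpace ℂ G]
    [NormedAddCommGroup H] [InnerProductSpace ℂ H] (B : G →ₗ.[ℂ] H) : Set G :=
  {x | ∃ hx : x ∈ B.domain, B ⟨x, hx⟩ = 0}

/-- The reduced minimum modulus `γ(B) = inf {‖Bx‖ / dist(x, ker B) : x ∈ dom B, Bx ≠ 0}`. -/
def redMinMod {G H : Type*} [NormedAddCommGroup G] [InnerProductSpace ℂ G]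
    [NormedAddCommGroup H] [InnerProductSpace ℂ H] (B : G →ₗ.[ℂ] H) : ℝ :=
  sInf {r : ℝ | ∃ x : B.domain, B x ≠ 0 ∧ r = ‖B x‖ / Metric.infDist (x : G) (pKer B)}

lemma aux_inner_self_real {H : Type*} [NormedAddCommGroup H] [InnerProductSpace ℂ H]
    [CompleteSpace H] (Q : H →L[ℂ] H) (hQsa : IsSelfAdjoint Q) (u : H) :
    ⟪Q u, u⟫_ℂ = ((⟪Q u, u⟫_ℂ).re : ℂ) := by
  have hsym := ContinuousLinearMap.isSelfAdjoint_iff_isSymmetric.mp hQsa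
  have hconj : (starRingEnd ℂ) (⟪Q u, u⟫_ℂ) = ⟪Q u, u⟫_ℂ := by
    rw [inner_conj_symm]
    exact (hsym u u).symm
  exact (Complex.conj_eq_iff_re.mp hconj).symm

lemma aux_normQ_sq_le {H : Type*} [NormedAddCommGroup H] [InnerProductSpace ℂ H]
    [CompleteSpace H] (Q : H →L[ℂ] H) (hQsa : IsSelfAdjoint Q) (q : ℝ)
    (hQ : ∀ u : H, (⟪Q u, u⟫_ℂ).re ∈ Set.Icc (0 : ℝ) (q * ‖u‖ ^ 2)) (u : H) :
    ‖Q u‖ ^ 2 ≤ q * (⟪Q u, u⟫_ℂ).re := by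
  have hsym := ContinuousLinearMap.isSelfAdjoint_iff_isSymmetric.mp hQsa
  set A : ℝ := (⟪Q (Q u), Q u⟫_ℂ).re with hA
  set C : ℝ := (⟪Q u, u⟫_ℂ).re with hC
  have hApos : 0 ≤ A := (hQ (Q u)).1
  have hAle : A ≤ q * ‖Q u‖ ^ 2 := (hQ (Q u)).2
  have hCpos : 0 ≤ C := (hQ u).1
  have key : ∀ s : ℝ, 0 ≤ A * (s * s) + (2 * ‖Q u‖ ^ 2) * s + C := by
    intro s
    have h0 := (hQ (u + (s : ℂ) • Q u)).1
    have hQQ : Q (u + (s : ℂ) • Q u) = Q u + (s : ℂ) • Q (Q u) := by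
      simp
    have hsa : ⟪Q (Q u), u⟫_ℂ = ⟪Q u, Q u⟫_ℂ := hsym (Q u) u
    have hexp : (⟪Q (u + (s : ℂ) • Q u), u + (s : ℂ) • Q u⟫_ℂ).re
        = A * (s * s) + (2 * ‖Q u‖ ^ 2) * s + C := by
      have hre : (⟪Q u, Q u⟫_ℂ).re = ‖Q u‖ ^ 2 := by
        rw [← RCLike.re_to_complex]; exact inner_self_eq_norm_sq (Q u)
      have him : (⟪Q u, Q u⟫_ℂ).im = 0 := by
        rw [← RCLike.im_to_complex]; exact inner_self_im (Q u)
      rw [hQQ]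
      simp only [inner_add_left, inner_add_right, inner_smul_left, inner_smul_right,
        Complex.conj_ofReal, hsa]
      simp only [Complex.add_re, Complex.mul_re, Complex.ofReal_re, Complex.ofReal_im,
        hre, him]
      ring
    rw [hexp] at h0
    exact h0
  have hdisc := discrim_le_zero key
  rw [discrim] at hdisc
  rcases eq_or_lt_of_le (norm_nonneg (Q u)) with h0 | hpos
  · have hQu : Q u = 0 := norm_eq_zero.mp h0.symm
    have hC0 : C = 0 := by rw [hC, hQu]; simp
    rw [hQu, hC0]; simp
  · have h1 : ‖Q u‖ ^ 2 * ‖Q u‖ ^ 2 ≤ (q * C) * ‖Q u‖ ^ 2 := by nlinarith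
    have := le_of_mul_le_mul_right h1 (by positivity : (0:ℝ) < ‖Q u‖ ^ 2)
    linarith

set_option maxHeartbeats 1000000 in
/-- Let `B` be a closed densely defined operator between Hilbert spaces with
reduced minimum modulus `γ(B)`, and `Q` bounded self-adjoint with `0 ≤ Q ≤ q`.  Suppose
`Re ω ≠ 0`, `Im ω ≤ 0`, and there are norm-bounded sequences `fₙ` (with `‖fₙ‖ ≥ c > 0`) and
`gₙ = gₙ¹ + gₙ² ∈ dom B`, `gₙ² ∈ ker B`, `gₙ¹ ⊥ ker B`, such that
`Bgₙ − (−iQ − ω)fₙ → 0`, `‖gₙ¹‖² − ‖fₙ‖² → 0` and `2 Im ω ‖fₙ‖² + ⟨Qfₙ, fₙ⟩ → 0`.  Then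
`γ(B)² ≤ 2q|Im ω| − 3(Im ω)² + (Re ω)²`. -/
theorem stmt_19 {G H : Type*}
    [NormedAddCommGroup G] [InnerProductSpace ℂ G] [CompleteSpace G]
    [NormedAddCommGroup H] [InnerProductSpace ℂ H] [CompleteSpace H]
    (B : G →ₗ.[ℂ] H) (hBdense : Dense (B.domain : Set G))
    (hBclosed : IsClosed (B.graph : Set (G × H)))
    (Q : H →L[ℂ] H) (hQsa : IsSelfAdjoint Q) (q : ℝ)
    (hQ : ∀ u : H, (⟪Q u, u⟫_ℂ).re ∈ Set.Icc (0 : ℝ) (q * ‖u‖ ^ 2))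
    (ω : ℂ) (hωre : ω.re ≠ 0) (hωim : ω.im ≤ 0)
    (f : ℕ → H) (hfbd : ∀ n, ‖f n‖ ≤ 1)
    (c : ℝ) (hc : 0 < c) (hfc : ∀ n, c ≤ ‖f n‖)
    (g g1 g2 : ℕ → B.domain) (hgbd : ∀ n, ‖(g n : G)‖ ≤ 1)
    (hsplit : ∀ n, g n = g1 n + g2 n)
    (hker : ∀ n, B (g2 n) = 0)
    (hperp : ∀ n, ∀ y ∈ pKer B, ⟪((g1 n : G)), y⟫_ℂ = 0)
    (hconv : Tendsto
      (fun n => ‖B (g n) - ((-Complex.I) • Q (f n) - ω • f n)‖) atTop (nhds 0))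
    (hnorms : Tendsto (fun n => ‖(g1 n : G)‖ ^ 2 - ‖f n‖ ^ 2) atTop (nhds 0))
    (hform : Tendsto
      (fun n => 2 * ω.im * ‖f n‖ ^ 2 + (⟪Q (f n), f n⟫_ℂ).re) atTop (nhds 0)) :
    (redMinMod B) ^ 2 ≤ 2 * q * |ω.im| - 3 * ω.im ^ 2 + ω.re ^ 2 := by
  classical
  set S := {r : ℝ | ∃ x : B.domain, B x ≠ 0 ∧ r = ‖B x‖ / Metric.infDist (x : G) (pKer B)}
    with hS
  have hγdef : redMinMod B = sInf S := rfl
  have hSlb : ∀ r ∈ S, 0 ≤ r := by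
    rintro r ⟨x, hx, rfl⟩
    exact div_nonneg (norm_nonneg _) Metric.infDist_nonneg
  have hγ0 : 0 ≤ redMinMod B := by rw [hγdef]; exact Real.sInf_nonneg hSlb
  have hq0 : 0 ≤ q := by
    have h1 := (hQ (f 0)).1
    have h2 := (hQ (f 0)).2
    have hf0 : 0 < ‖f 0‖ := lt_of_lt_of_le hc (hfc 0)
    have hf02 : 0 < ‖f 0‖ ^ 2 := by positivity
    nlinarith [h1, h2, hf02]
  have habs : |ω.im| = -ω.im := abs_of_nonpos hωim
  -- kernel facts
  have hker0 : (0 : G) ∈ pKer B := by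
    refine ⟨B.domain.zero_mem, ?_⟩
    have h0 : (⟨0, B.domain.zero_mem⟩ : B.domain) = 0 := rfl
    rw [h0]
    exact B.map_zero
  have hpKer_sub : ∀ y z : G, y ∈ pKer B → z ∈ pKer B → y - z ∈ pKer B := by
    rintro y z ⟨hy, hy0⟩ ⟨hz, hz0⟩
    refine ⟨sub_mem hy hz, ?_⟩
    have h0 : (⟨y - z, sub_mem hy hz⟩ : B.domain) = ⟨y, hy⟩ - ⟨z, hz⟩ := rfl
    rw [h0, B.map_sub, hy0, hz0, sub_zero]
  have hg2mem : ∀ n, ((g2 n : G)) ∈ pKer B := by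
    intro n
    refine ⟨(g2 n).2, ?_⟩
    have h0 : (⟨(g2 n : G), (g2 n).2⟩ : B.domain) = g2 n := rfl
    rw [h0]
    exact hker n
  -- distance lower bound
  have hdist : ∀ n, ‖(g1 n : G)‖ ≤ Metric.infDist ((g n : G)) (pKer B) := by
    intro n
    by_contra hlt
    push_neg at hlt
    obtain ⟨y, hy, hdy⟩ := (Metric.infDist_lt_iff ⟨0, hker0⟩).mp hlt
    have hdecomp : (g n : G) - y = (g1 n : G) + ((g2 n : G) - y) := by
      have h0 : ((g n : B.domain) : G) = (g1 n : G) + (g2 n : G) := by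
        rw [hsplit n]; rfl
      rw [h0]; abel
    have hmem2 : ((g2 n : G)) - y ∈ pKer B := hpKer_sub _ _ (hg2mem n) hy
    have hinner : ⟪((g1 n : G)), ((g2 n : G)) - y⟫_ℂ = 0 := hperp n _ hmem2
    have hpyth : ‖(g n : G) - y‖ ^ 2 = ‖(g1 n : G)‖ ^ 2 + ‖((g2 n : G)) - y‖ ^ 2 := by
      rw [hdecomp]
      have h0 := norm_add_sq (𝕜 := ℂ) ((g1 n : G)) (((g2 n : G)) - y)
      simpa [hinner] using h0
    have h1 : ‖(g1 n : G)‖ ≤ ‖(g n : G) - y‖ := by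
      nlinarith [norm_nonneg ((g n : G) - y), norm_nonneg (((g2 n : G)) - y),
        norm_nonneg ((g1 n : G))]
    rw [dist_eq_norm] at hdy
    linarith
  -- the perturbation
  set T : ℕ → H := fun n => (-Complex.I) • Q (f n) - ω • f n with hTdef
  have hconvT : Tendsto (fun n => ‖B (g n) - T n‖) atTop (nhds 0) := by
    simpa only [hTdef] using hconv
  have hTsq : ∀ n, ‖T n‖ ^ 2 = ‖Q (f n)‖ ^ 2 + 2 * ω.im * (⟪Q (f n), f n⟫_ℂ).re
      + (ω.re ^ 2 + ω.im ^ 2) * ‖f n‖ ^ 2 := by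
    intro n
    have h1 : ‖(-Complex.I) • Q (f n)‖ = ‖Q (f n)‖ := by
      simp [norm_smul]
    have h2 : ‖ω • f n‖ ^ 2 = (ω.re ^ 2 + ω.im ^ 2) * ‖f n‖ ^ 2 := by
      rw [norm_smul, mul_pow, Complex.sq_norm, Complex.normSq_apply]
      ring
    have hip : (⟪(-Complex.I) • Q (f n), ω • f n⟫_ℂ).re
        = -(ω.im * (⟪Q (f n), f n⟫_ℂ).re) := by
      rw [inner_smul_left, inner_smul_right, aux_inner_self_real Q hQsa (f n)]
      simp [Complex.mul_re, Complex.mul_im]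
    have hexp := norm_sub_sq (𝕜 := ℂ) ((-Complex.I) • Q (f n)) (ω • f n)
    rw [RCLike.re_to_complex] at hexp
    show ‖(-Complex.I) • Q (f n) - ω • f n‖ ^ 2 = _
    rw [hexp, h1, hip, h2]
    ring
  have hTub : ∀ n, ‖T n‖ ≤ ‖Q‖ + ‖ω‖ := by
    intro n
    have b1 := Q.le_opNorm (f n)
    have b2 := hfbd n
    have b3 := norm_sub_le ((-Complex.I) • Q (f n)) (ω • f n)
    have e1 : ‖(-Complex.I) • Q (f n)‖ = ‖Q (f n)‖ := by simp [norm_smul]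
    have e2 : ‖ω • f n‖ = ‖ω‖ * ‖f n‖ := norm_smul _ _
    show ‖(-Complex.I) • Q (f n) - ω • f n‖ ≤ _
    nlinarith [norm_nonneg ω, norm_nonneg (f n), norm_nonneg Q]
  have hTge : ∀ n, ω.re ^ 2 * ‖f n‖ ^ 2 ≤ ‖T n‖ ^ 2 := by
    intro n
    have hcs : (⟪Q (f n), f n⟫_ℂ).re ≤ ‖Q (f n)‖ * ‖f n‖ := by
      have h0 := re_inner_le_norm (𝕜 := ℂ) (Q (f n)) (f n)
      simpa using h0
    have h1 : 0 ≤ (-ω.im) * (‖Q (f n)‖ * ‖f n‖ - (⟪Q (f n), f n⟫_ℂ).re) :=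
      mul_nonneg (neg_nonneg.mpr hωim) (by linarith)
    rw [hTsq n]
    nlinarith [sq_nonneg (‖Q (f n)‖ + ω.im * ‖f n‖)]
  have hTle : ∀ n, ‖T n‖ ^ 2 ≤ (2 * q * |ω.im| - 3 * ω.im ^ 2 + ω.re ^ 2) * ‖f n‖ ^ 2
      + (q + 2 * ω.im) * (2 * ω.im * ‖f n‖ ^ 2 + (⟪Q (f n), f n⟫_ℂ).re) := by
    intro n
    have hq2 := aux_normQ_sq_le Q hQsa q hQ (f n)
    rw [hTsq n, habs]
    nlinarith [hq2]
  -- main contradiction argument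
  by_contra hcon
  push_neg at hcon
  have hrK : Tendsto (fun n =>
      ((q + 2 * ω.im) * (2 * ω.im * ‖f n‖ ^ 2 + (⟪Q (f n), f n⟫_ℂ).re)
        + 2 * ‖B (g n) - T n‖ * (‖Q‖ + ‖ω‖) + ‖B (g n) - T n‖ ^ 2)
        - (redMinMod B) ^ 2 * (‖(g1 n : G)‖ ^ 2 - ‖f n‖ ^ 2)) atTop (nhds 0) := by
    have l1 := hform.const_mul (q + 2 * ω.im)
    have l2 := (hconvT.const_mul (2 : ℝ)).mul_const (‖Q‖ + ‖ω‖)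
    have l3 := hconvT.pow 2
    have l4 := hnorms.const_mul ((redMinMod B) ^ 2)
    have l5 := ((l1.add l2).add l3).sub l4
    simpa using l5
  have hev : ∀ᶠ n in atTop,
      ((redMinMod B) ^ 2 - (2 * q * |ω.im| - 3 * ω.im ^ 2 + ω.re ^ 2)) * c ^ 2 ≤
      ((q + 2 * ω.im) * (2 * ω.im * ‖f n‖ ^ 2 + (⟪Q (f n), f n⟫_ℂ).re)
        + 2 * ‖B (g n) - T n‖ * (‖Q‖ + ‖ω‖) + ‖B (g n) - T n‖ ^ 2)
        - (redMinMod B) ^ 2 * (‖(g1 n : G)‖ ^ 2 - ‖f n‖ ^ 2) := by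
    have e1 : ∀ᶠ n in atTop, ‖B (g n) - T n‖ < |ω.re| * c :=
      hconvT.eventually_lt_const (mul_pos (abs_pos.mpr hωre) hc)
    have e2 : ∀ᶠ n in atTop, -(c ^ 2) / 2 < ‖(g1 n : G)‖ ^ 2 - ‖f n‖ ^ 2 :=
      hnorms.eventually_const_lt (by nlinarith)
    filter_upwards [e1, e2] with n h1 h2
    have hfF : c ≤ ‖f n‖ := hfc n
    have hf2 : c ^ 2 ≤ ‖f n‖ ^ 2 := pow_le_pow_left₀ hc.le hfF 2
    have hTgen := hTge n
    have hTlen := hTle n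
    have hTubn := hTub n
    have hBub : ‖B (g n)‖ ≤ ‖T n‖ + ‖B (g n) - T n‖ := by
      have h0 : T n + (B (g n) - T n) = B (g n) := by abel
      calc ‖B (g n)‖ = ‖T n + (B (g n) - T n)‖ := by rw [h0]
        _ ≤ ‖T n‖ + ‖B (g n) - T n‖ := norm_add_le _ _
    have hBlb : ‖T n‖ - ‖B (g n) - T n‖ ≤ ‖B (g n)‖ := by
      have h0 : ‖T n‖ - ‖B (g n)‖ ≤ ‖T n - B (g n)‖ := norm_sub_norm_le _ _
      rw [norm_sub_rev (T n) (B (g n))] at h0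
      linarith

    have hTpos : |ω.re| * c ≤ ‖T n‖ := by
      have hsq0 : (|ω.re| * c) ^ 2 ≤ ‖T n‖ ^ 2 := by
        calc (|ω.re| * c) ^ 2 = ω.re ^ 2 * c ^ 2 := by rw [mul_pow, sq_abs]
          _ ≤ ω.re ^ 2 * ‖f n‖ ^ 2 := mul_le_mul_of_nonneg_left hf2 (sq_nonneg _)
          _ ≤ ‖T n‖ ^ 2 := hTgen
      exact (pow_le_pow_iff_left₀ (mul_nonneg (abs_nonneg _) hc.le) (norm_nonneg _)
        two_ne_zero).mp hsq0
    have hBpos : 0 < ‖B (g n)‖ := by linarith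
    have hBne : B (g n) ≠ 0 := by
      intro h0
      rw [h0, norm_zero] at hBpos
      exact lt_irrefl _ hBpos
    have hg1sq : c ^ 2 / 2 ≤ ‖(g1 n : G)‖ ^ 2 := by linarith
    have hg1pos : 0 < ‖(g1 n : G)‖ := by
      have h' : (0:ℝ) ^ 2 < ‖(g1 n : G)‖ ^ 2 := by
        have : (0:ℝ) < c ^ 2 / 2 := by positivity
        simpa using lt_of_lt_of_le this hg1sq
      exact lt_of_pow_lt_pow_left₀ 2 (norm_nonneg _) h'
    have hmem : ‖B (g n)‖ / Metric.infDist ((g n : G)) (pKer B) ∈ S := ⟨g n, hBne, rfl⟩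
    have hγle : redMinMod B ≤ ‖B (g n)‖ / Metric.infDist ((g n : G)) (pKer B) := by
      rw [hγdef]
      exact csInf_le ⟨0, fun r hr => hSlb r hr⟩ hmem
    have hdistn := hdist n
    have hdistpos : 0 < Metric.infDist ((g n : G)) (pKer B) := lt_of_lt_of_le hg1pos hdistn
    have hmul : redMinMod B * ‖(g1 n : G)‖ ≤ ‖B (g n)‖ := by
      have h3 : redMinMod B * Metric.infDist ((g n : G)) (pKer B) ≤ ‖B (g n)‖ :=
        (le_div_iff₀ hdistpos).mp hγle
      have h4 : redMinMod B * ‖(g1 n : G)‖ ≤ redMinMod B * Metric.infDist ((g n : G)) (pKer B) :=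
        mul_le_mul_of_nonneg_left hdistn hγ0
      linarith
    have hsq : (redMinMod B) ^ 2 * ‖(g1 n : G)‖ ^ 2 ≤ ‖B (g n)‖ ^ 2 := by
      have h5 := pow_le_pow_left₀ (mul_nonneg hγ0 (norm_nonneg ((g1 n : G)))) hmul 2
      rw [mul_pow] at h5
      exact h5
    have hBsq : ‖B (g n)‖ ^ 2 ≤ (2 * q * |ω.im| - 3 * ω.im ^ 2 + ω.re ^ 2) * ‖f n‖ ^ 2
        + ((q + 2 * ω.im) * (2 * ω.im * ‖f n‖ ^ 2 + (⟪Q (f n), f n⟫_ℂ).re)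
          + 2 * ‖B (g n) - T n‖ * (‖Q‖ + ‖ω‖) + ‖B (g n) - T n‖ ^ 2) := by
      have hstep : ‖B (g n)‖ ^ 2 ≤ (‖T n‖ + ‖B (g n) - T n‖) ^ 2 :=
        pow_le_pow_left₀ (norm_nonneg _) hBub 2
      rw [show (‖T n‖ + ‖B (g n) - T n‖) ^ 2
          = ‖T n‖ ^ 2 + 2 * (‖B (g n) - T n‖ * ‖T n‖) + ‖B (g n) - T n‖ ^ 2 from by ring]
        at hstep
      have hbd : ‖B (g n) - T n‖ * ‖T n‖ ≤ ‖B (g n) - T n‖ * (‖Q‖ + ‖ω‖) :=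
        mul_le_mul_of_nonneg_left hTubn (norm_nonneg _)
      linarith [hstep, hbd, hTlen]
    have hint1 : 0 ≤ ((redMinMod B) ^ 2 - (2 * q * |ω.im| - 3 * ω.im ^ 2 + ω.re ^ 2))
        * (‖f n‖ ^ 2 - c ^ 2) :=
      mul_nonneg (sub_nonneg.mpr hcon.le) (sub_nonneg.mpr hf2)
    linarith [hsq, hBsq, hint1]

  have hfinal := ge_of_tendsto hrK hev
  have hpos : 0 < ((redMinMod B) ^ 2 - (2 * q * |ω.im| - 3 * ω.im ^ 2 + ω.re ^ 2)) * c ^ 2 :=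
    mul_pos (by linarith) (by positivity)
  linarith

end
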